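/- Let S be a Dirac bundle and f: M → ℝ smooth. Define the modified connection ∇^f_X σ = ∇_X σ + f X·σ. Then ∇^f is metric, its connection laplacian satisfies ∇^{f*}∇^f σ = ∇*∇σ − (∇f)·σ − 2f Dσ + n f² σ, and (D − f)²σ = ∇^{f*}∇^f σ + Rσ + (1−n) f² σ. -/

import Mathlib

open scoped InnerProductSpace

/-- For a Dirac bundle `S` over a riemannian `n`-manifold and a smooth
function `f : M → ℝ`, the modified connection `∇^f_X σ = ∇_X σ + f X·σ` is metric, its
connection laplacian satisfies `∇^{f*}∇^f σ = ∇*∇σ − (∇f)·σ − 2f Dσ + n f² σ`, and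
`(D − f)²σ = ∇^{f*}∇^f σ + Rσ + (1−n) f² σ`.  Sections are modelled as maps `M → S`
(with `S` the fiber), `e` is an orthonormal frame, `Xd` differentiation of functions along
vector fields, `nabV`/`nabS` the connections, `grad` the gradient, `D` the Dirac operator,
`lap` the connection laplacian, `Rw` the Weitzenböck operator; the hypotheses are the
Dirac-bundle structure equations and the generalized Bochner identity. -/
theorem modified_connection_identities
    {M V S : Type*} [NormedAddCommGroup V] [InnerProductSpace ℝ V]
    [NormedAddCommGroup S] [InnerProductSpace ℝ S]
    (n : ℕ)
    (c : V →ₗ[ℝ] S →ₗ[ℝ] S)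
    (hskew : ∀ (v : V) (s t : S), ⟪c v s, t⟫_ℝ + ⟪s, c v t⟫_ℝ = 0)
    (hrel : ∀ (v w : V) (s : S), c v (c w s) + c w (c v s) = (-(2 * ⟪v, w⟫_ℝ)) • s)
    (e : Fin n → M → V)
    (horth : ∀ (p : M) (i j : Fin n), ⟪e i p, e j p⟫_ℝ = if i = j then 1 else 0)
    (Xd : (M → V) → (M → ℝ) →ₗ[ℝ] (M → ℝ))
    (nabV : (M → V) → (M → V) → (M → V))
    (nabS : (M → V) → (M → S) →ₗ[ℝ] (M → S))
    (hmetric : ∀ (X : M → V) (σ τ : M → S),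
      Xd X (fun p => ⟪σ p, τ p⟫_ℝ)
        = fun p => ⟪nabS X σ p, τ p⟫_ℝ + ⟪σ p, nabS X τ p⟫_ℝ)
    (hLeibS : ∀ (X : M → V) (g : M → ℝ) (σ : M → S),
      nabS X (fun p => g p • σ p) = fun p => Xd X g p • σ p + g p • nabS X σ p)
    (hLeibc : ∀ (X Y : M → V) (σ : M → S),
      nabS X (fun p => c (Y p) (σ p))
        = fun p => c (nabV X Y p) (σ p) + c (Y p) (nabS X σ p))
    (D : (M → S) → (M → S))
    (hD : ∀ (σ : M → S) (p : M), D σ p = ∑ i, c (e i p) (nabS (e i) σ p))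
    (grad : (M → ℝ) → (M → V))
    (hgrad : ∀ (g : M → ℝ) (p : M) (s : S),
      c (grad g p) s = ∑ i, Xd (e i) g p • c (e i p) s)
    (hDLeib : ∀ (g : M → ℝ) (σ : M → S) (p : M),
      D (fun q => g q • σ q) p = c (grad g p) (σ p) + g p • D σ p)
    (lap : (M → S) → (M → S))
    (hlap : ∀ (σ : M → S) (p : M),
      lap σ p = -∑ j, (nabS (e j) (nabS (e j) σ) p - nabS (nabV (e j) (e j)) σ p))
    (Rw : (M → S) → (M → S))
    (hBochner : ∀ (σ : M → S) (p : M), D (D σ) p = lap σ p + Rw σ p)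
    (f : M → ℝ)
    (nabF : (M → V) → (M → S) → (M → S))
    (hnabF : ∀ (X : M → V) (σ : M → S) (p : M),
      nabF X σ p = nabS X σ p + f p • c (X p) (σ p))
    (lapF : (M → S) → (M → S))
    (hlapF : ∀ (σ : M → S) (p : M),
      lapF σ p = -∑ j, (nabF (e j) (nabF (e j) σ) p - nabF (nabV (e j) (e j)) σ p)) :
    -- (1) `∇^f` is metric
    (∀ (X : M → V) (σ τ : M → S),
      Xd X (fun p => ⟪σ p, τ p⟫_ℝ)
        = fun p => ⟪nabF X σ p, τ p⟫_ℝ + ⟪σ p, nabF X τ p⟫_ℝ) ∧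
    -- (2) the laplacian of the modified connection
    (∀ (σ : M → S) (p : M),
      lapF σ p = lap σ p - c (grad f p) (σ p) - (2 * f p) • D σ p
        + ((n : ℝ) * f p ^ 2) • σ p) ∧
    -- (3) `(D − f)²σ = ∇^{f*}∇^f σ + Rσ + (1−n) f² σ`
    (∀ (σ : M → S) (p : M),
      D (fun q => D σ q - f q • σ q) p - f p • (D σ p - f p • σ p)
        = lapF σ p + Rw σ p + ((1 - (n : ℝ)) * f p ^ 2) • σ p) := by
  -- key square identity: c v (c v s) = -s for unit v
  have hsq : ∀ (j : Fin n) (p : M) (s : S), c (e j p) (c (e j p) s) = -s := by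
    intro j p s
    have h := hrel (e j p) (e j p) s
    rw [horth p j j, if_pos rfl] at h
    have h2 : (2 : ℝ) • c (e j p) (c (e j p) s) = (2 : ℝ) • (-s) := by
      rw [two_smul, h]; module
    exact smul_right_injective S (by norm_num) h2
  -- part 2
  have part2 : ∀ (σ : M → S) (p : M),
      lapF σ p = lap σ p - c (grad f p) (σ p) - (2 * f p) • D σ p
        + ((n : ℝ) * f p ^ 2) • σ p := by
    intro σ p
    have key : ∀ j : Fin n,
        nabF (e j) (nabF (e j) σ) p - nabF (nabV (e j) (e j)) σ p
        = (nabS (e j) (nabS (e j) σ) p - nabS (nabV (e j) (e j)) σ p)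
          + Xd (e j) f p • c (e j p) (σ p)
          + (2 * f p) • c (e j p) (nabS (e j) σ p)
          - (f p ^ 2) • σ p := by
      intro j
      have hF : nabF (e j) σ = nabS (e j) σ + fun q => f q • c (e j q) (σ q) :=
        funext fun q => hnabF (e j) σ q
      have h1 : nabS (e j) (nabF (e j) σ) p
          = nabS (e j) (nabS (e j) σ) p
            + nabS (e j) (fun q => f q • c (e j q) (σ q)) p := by
        rw [hF, map_add]; rfl
      have h2 : nabS (e j) (fun q => f q • c (e j q) (σ q)) p
          = Xd (e j) f p • c (e j p) (σ p)
            + f p • (c (nabV (e j) (e j) p) (σ p) + c (e j p) (nabS (e j) σ p)) := by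
        have hA := congrFun (hLeibS (e j) f (fun q => c (e j q) (σ q))) p
        have hB := congrFun (hLeibc (e j) (e j) σ) p
        rw [hA, hB]
      have h3 : nabF (e j) σ p = nabS (e j) σ p + f p • c (e j p) (σ p) := hnabF _ _ _
      rw [hnabF (e j) (nabF (e j) σ) p, hnabF (nabV (e j) (e j)) σ p, h1, h2, h3]
      rw [map_add, map_smul]
      rw [hsq j p (σ p)]
      module
    rw [hlapF, hlap]
    calc -∑ j, (nabF (e j) (nabF (e j) σ) p - nabF (nabV (e j) (e j)) σ p)
        = -∑ j, ((nabS (e j) (nabS (e j) σ) p - nabS (nabV (e j) (e j)) σ p)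
          + Xd (e j) f p • c (e j p) (σ p)
          + (2 * f p) • c (e j p) (nabS (e j) σ p)
          - (f p ^ 2) • σ p) := by
          rw [Finset.sum_congr rfl (fun j _ => key j)]
      _ = -∑ j, (nabS (e j) (nabS (e j) σ) p - nabS (nabV (e j) (e j)) σ p)
          - ∑ j, Xd (e j) f p • c (e j p) (σ p)
          - (2 * f p) • ∑ j, c (e j p) (nabS (e j) σ p)
          + ((n : ℝ) * f p ^ 2) • σ p := by
          simp [Finset.sum_add_distrib, Finset.sum_sub_distrib, Finset.smul_sum,
            Finset.sum_const, Finset.card_univ, mul_smul]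
          module
      _ = _ := by
          rw [hgrad f p (σ p), hD σ p]
  refine ⟨?_, part2, ?_⟩
  · intro X σ τ
    rw [hmetric X σ τ]
    funext p
    have h := hskew (X p) (σ p) (τ p)
    rw [hnabF, hnabF]
    simp only [inner_add_left, inner_add_right, real_inner_smul_left, real_inner_smul_right]
    linear_combination (-(f p)) * h
  · intro σ p
    have hDlin : D (fun q => D σ q - f q • σ q) p
        = D (D σ) p - D (fun q => f q • σ q) p := by
      rw [hD, hD (D σ), hD (fun q => f q • σ q), ← Finset.sum_sub_distrib]
      refine Finset.sum_congr rfl fun i _ => ?_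
      have : (fun q => D σ q - f q • σ q) = D σ - fun q => f q • σ q := rfl
      rw [this, map_sub, Pi.sub_apply, map_sub]
    rw [hDlin, hBochner, hDLeib, part2]
    module
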